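/- Let k = F_2[t_1,t_2,t_3]/(t_1^2,t_2^2,t_3^2) and M = k^3/⟨t_1 e_1 + t_2 e_2 + t_3 e_3⟩. Then the map Λ^2 M → M ⊗ M, a ∧ b ↦ a ⊗ b − b ⊗ a, is not injective: the element t_1 e_1 ∧ t_2 e_2 is a nonzero element of its kernel. -/

import Mathlib

/-!
STATEMENT 7: Let `k = F₂[t₁,t₂,t₃]/(t₁²,t₂²,t₃²)` and `M = k³/⟨t₁e₁ + t₂e₂ + t₃e₃⟩`.
Then the map `Λ²M → M ⊗ M`, `a ∧ b ↦ a ⊗ b − b ⊗ a`, is not injective: the element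
`t₁e₁ ∧ t₂e₂` is a nonzero element of its kernel.
-/

open scoped TensorProduct
open MvPolynomial

set_option maxHeartbeats 1000000
set_option synthInstance.maxHeartbeats 400000

noncomputable section

/-- `k = F₂[t₁,t₂,t₃]/(t₁²,t₂²,t₃²)`. -/
abbrev KK : Type :=
  MvPolynomial (Fin 3) (ZMod 2) ⧸
    Ideal.span (Set.range fun i : Fin 3 => (X i : MvPolynomial (Fin 3) (ZMod 2)) ^ 2)

/-- The class of the variable `tᵢ` in `k`. -/
def tK (i : Fin 3) : KK := Ideal.Quotient.mk _ (X i)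

/-- `M = k³/⟨t₁e₁ + t₂e₂ + t₃e₃⟩`. -/
abbrev MM : Type := (Fin 3 → KK) ⧸ Submodule.span KK {(fun i => tK i : Fin 3 → KK)}

/-- The element `tᵢ eᵢ ∈ M`. -/
def xElt (i : Fin 3) : MM := Submodule.Quotient.mk (Pi.single i (tK i))

/-- The wedge `v 0 ∧ ⋯ ∧ v (n-1)` in the `n`-th exterior power. -/
def wedgeMk (R : Type*) [CommRing R] (M : Type*) [AddCommGroup M] [Module R M]
    (n : ℕ) (v : Fin n → M) : ⋀[R]^n M :=
  ⟨ExteriorAlgebra.ιMulti R n v, by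
    rw [← ExteriorAlgebra.ιMulti_span_fixedDegree]
    exact Submodule.subset_span ⟨v, rfl⟩⟩

/-- The element `t₁e₁ ∧ t₂e₂ ∈ Λ² M`. -/
def kosElt : ⋀[KK]^2 MM := wedgeMk KK MM 2 ![xElt 0, xElt 1]

lemma two_KK : (2 : KK) = 0 := by
  have h : ((algebraMap (ZMod 2) KK) 2) = 2 := map_ofNat _ 2
  rw [← h, show (2 : ZMod 2) = 0 by decide, map_zero]

lemma tsq (i : Fin 3) : tK i * tK i = 0 := by
  have : tK i * tK i = Ideal.Quotient.mk _ ((X i : MvPolynomial (Fin 3) (ZMod 2)) ^ 2) := by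
    rw [pow_two, map_mul]; rfl
  rw [this, Ideal.Quotient.eq_zero_iff_mem]
  exact Ideal.subset_span ⟨i, rfl⟩

/-- The alternating symmetric bilinear form on `k³`. -/
def Bf : (Fin 3 → KK) →ₗ[KK] (Fin 3 → KK) →ₗ[KK] KK :=
  LinearMap.mk₂ KK
    (fun x y => tK 2 * (x 0 * y 1 + x 1 * y 0) + tK 1 * (x 0 * y 2 + x 2 * y 0)
      + tK 0 * (x 1 * y 2 + x 2 * y 1))
    (fun x x' y => by simp only [Pi.add_apply]; ring)
    (fun c x y => by simp only [Pi.smul_apply, smul_eq_mul]; ring)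
    (fun x y y' => by simp only [Pi.add_apply]; ring)
    (fun c x y => by simp only [Pi.smul_apply, smul_eq_mul]; ring)

lemma Bf_apply (x y : Fin 3 → KK) :
    Bf x y = tK 2 * (x 0 * y 1 + x 1 * y 0) + tK 1 * (x 0 * y 2 + x 2 * y 0)
      + tK 0 * (x 1 * y 2 + x 2 * y 1) := rfl

lemma Bf_symm (x y : Fin 3 → KK) : Bf x y = Bf y x := by
  rw [Bf_apply, Bf_apply]; ring

lemma Bf_self (x : Fin 3 → KK) : Bf x x = 0 := by
  have : Bf x x = 2 * (tK 2 * (x 0 * x 1) + tK 1 * (x 0 * x 2) + tK 0 * (x 1 * x 2)) := by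
    rw [Bf_apply]; ring
  rw [this, two_KK, zero_mul]

lemma Bf_r_right (x : Fin 3 → KK) : Bf x (fun i => tK i) = 0 := by
  have : Bf x (fun i => tK i) =
      2 * (tK 1 * tK 2 * x 0 + tK 0 * tK 2 * x 1 + tK 0 * tK 1 * x 2) := by
    rw [Bf_apply]; ring
  rw [this, two_KK, zero_mul]

lemma Bf_r_left (y : Fin 3 → KK) : Bf (fun i => tK i) y = 0 := by
  rw [Bf_symm]; exact Bf_r_right y

def rSub : Submodule KK (Fin 3 → KK) := Submodule.span KK {(fun i => tK i : Fin 3 → KK)}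

lemma Bf_vanish_left (x : Fin 3 → KK) (hx : x ∈ rSub) (y : Fin 3 → KK) : Bf x y = 0 := by
  obtain ⟨c, rfl⟩ := Submodule.mem_span_singleton.mp hx
  rw [map_smul, LinearMap.smul_apply, Bf_r_left, smul_zero]

/-- First descent. -/
def D1 : MM →ₗ[KK] ((Fin 3 → KK) →ₗ[KK] KK) :=
  Submodule.liftQ _ Bf (fun x hx =>
    LinearMap.mem_ker.mpr (LinearMap.ext fun y => Bf_vanish_left x hx y))

lemma D1_flip_vanish (y : Fin 3 → KK)
    (hy : y ∈ Submodule.span KK {(fun i => tK i : Fin 3 → KK)}) : D1.flip y = 0 := by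
  apply LinearMap.ext
  intro m
  obtain ⟨x, rfl⟩ := Submodule.Quotient.mk_surjective _ m
  show Bf x y = 0
  rw [Bf_symm]
  exact Bf_vanish_left y hy x

/-- Full descent to the quotient in both variables. -/
def Dm : MM →ₗ[KK] (MM →ₗ[KK] KK) :=
  (Submodule.liftQ _ D1.flip (fun y hy => LinearMap.mem_ker.mpr (D1_flip_vanish y hy))).flip

lemma Dm_mk_mk (x y : Fin 3 → KK) :
    Dm (Submodule.Quotient.mk x) (Submodule.Quotient.mk y) = Bf x y := rfl

lemma Dm_self (m : MM) : Dm m m = 0 := by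
  obtain ⟨x, rfl⟩ := Submodule.Quotient.mk_surjective _ m
  rw [Dm_mk_mk, Bf_self]

/-- `Dm` as a multilinear map on `Fin 2 → MM`. -/
def Dmulti : MultilinearMap KK (fun _ : Fin 2 => MM) KK where
  toFun v := Dm (v 0) (v 1)
  map_update_add' v i x y := by
    fin_cases i <;>
      simp [Function.update, Fin.ext_iff, map_add, LinearMap.add_apply]
  map_update_smul' v i c x := by
    fin_cases i <;>
      simp [Function.update, Fin.ext_iff, map_smul, LinearMap.smul_apply]

/-- `Dm` as an alternating map. -/
def Dalt : MM [⋀^Fin 2]→ₗ[KK] KK where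
  toMultilinearMap := Dmulti
  map_eq_zero_of_eq' v i j hij hne := by
    have h01 : v 0 = v 1 := by
      fin_cases i <;> fin_cases j <;> first | exact absurd rfl hne | exact hij | exact hij.symm
    show Dm (v 0) (v 1) = 0
    rw [h01]
    exact Dm_self (v 1)

/-- family of alternating maps for `liftAlternating`. -/
def Ffam : ∀ n : ℕ, MM [⋀^Fin n]→ₗ[KK] KK
  | 2 => Dalt
  | _ => 0

lemma lift_eval (v : Fin 2 → MM) :
    ExteriorAlgebra.liftAlternating Ffam (ExteriorAlgebra.ιMulti KK 2 v) = Dm (v 0) (v 1) := by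
  rw [ExteriorAlgebra.liftAlternating_apply_ιMulti]
  rfl

lemma t012_ne : tK 0 * tK 1 * tK 2 ≠ 0 := by
  have h : tK 0 * tK 1 * tK 2 =
      Ideal.Quotient.mk _ ((X 0 * X 1 * X 2 : MvPolynomial (Fin 3) (ZMod 2))) := by
    simp [tK, map_mul]
  rw [h, Ne, Ideal.Quotient.eq_zero_iff_mem, Ideal.span, Submodule.mem_span_range_iff_exists_fun]
  rintro ⟨c, hc⟩
  set m : (Fin 3) →₀ ℕ :=
    Finsupp.single (0 : Fin 3) 1 + Finsupp.single 1 1 + Finsupp.single 2 1 with hm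
  have hcoeff := congrArg (MvPolynomial.coeff m) hc
  classical
  have hzero : ∀ i : Fin 3,
      MvPolynomial.coeff m (c i • (X i : MvPolynomial (Fin 3) (ZMod 2)) ^ 2) = 0 := by
    intro i
    rw [smul_eq_mul, pow_two, ← mul_assoc, coeff_mul_X', if_pos, coeff_mul_X', if_neg]
    · simp only [Finsupp.mem_support_iff, Finsupp.coe_tsub, Pi.sub_apply, hm,
        Finsupp.add_apply, Finsupp.single_apply]
      fin_cases i <;> decide
    · simp only [Finsupp.mem_support_iff, hm, Finsupp.add_apply, Finsupp.single_apply]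
      fin_cases i <;> decide
  rw [MvPolynomial.coeff_sum, Finset.sum_eq_zero (fun i _ => hzero i)] at hcoeff
  have hone : MvPolynomial.coeff m (X 0 * X 1 * X 2 : MvPolynomial (Fin 3) (ZMod 2)) = 1 := by
    have : (X 0 * X 1 * X 2 : MvPolynomial (Fin 3) (ZMod 2)) = monomial m 1 := by
      rw [hm]
      simp [X, monomial_mul]
    rw [this, coeff_monomial, if_pos rfl]
  rw [hone] at hcoeff
  exact one_ne_zero hcoeff.symm

lemma key_ne : Dm (xElt 0) (xElt 1) ≠ 0 := by
  have h1 : Dm (xElt 0) (xElt 1) = Bf (Pi.single 0 (tK 0)) (Pi.single 1 (tK 1)) := rfl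
  have h2 : Bf (Pi.single 0 (tK 0)) (Pi.single 1 (tK 1)) = tK 0 * tK 1 * tK 2 := by
    rw [Bf_apply]
    simp only [Pi.single_apply]
    norm_num [Fin.ext_iff]
    ring
  rw [h1, h2]
  exact t012_ne

/-! ### The tensor computation -/

lemma smul_xElt (i : Fin 3) : tK i • xElt i = 0 := by
  have h : tK i • (Pi.single i (tK i) : Fin 3 → KK) = Pi.single i (tK i * tK i) := by
    funext j
    by_cases hj : j = i
    · subst hj; simp
    · simp [Pi.single_apply, hj]
  show tK i • (Submodule.Quotient.mk (Pi.single i (tK i)) : MM) = 0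
  rw [← Submodule.Quotient.mk_smul, h, tsq]
  simp

lemma xElt_eq_smul (i : Fin 3) :
    xElt i = tK i • (Submodule.Quotient.mk (Pi.single i 1) : MM) := by
  have h : tK i • (Pi.single i 1 : Fin 3 → KK) = Pi.single i (tK i) := by
    funext j
    by_cases hj : j = i
    · subst hj; simp
    · simp [Pi.single_apply, hj]
  rw [← Submodule.Quotient.mk_smul, h]
  rfl

lemma sum_xElt : xElt 0 + xElt 1 + xElt 2 = 0 := by
  have h : (Pi.single (0 : Fin 3) (tK 0) : Fin 3 → KK) + (Pi.single 1 (tK 1) : Fin 3 → KK)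
      + (Pi.single 2 (tK 2) : Fin 3 → KK) = fun i => tK i := by
    funext j
    fin_cases j <;> simp [Pi.single_apply]
  unfold xElt
  rw [← Submodule.Quotient.mk_add, ← Submodule.Quotient.mk_add, Submodule.Quotient.mk_eq_zero, h]
  exact Submodule.mem_span_singleton_self _

lemma char2T (z : MM ⊗[KK] MM) : z + z = 0 := by
  rw [← two_smul KK z, two_KK]; exact zero_smul KK z

lemma cancT {x y : MM ⊗[KK] MM} (h : x + y = 0) : x = y := by
  have := char2T y
  calc x = x + (y + y) := by rw [this, add_zero]
  _ = (x + y) + y := by abel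
  _ = y := by rw [h, zero_add]

lemma diagT (i : Fin 3) : xElt i ⊗ₜ[KK] xElt i = 0 := by
  nth_rewrite 1 [xElt_eq_smul i]
  rw [TensorProduct.smul_tmul (tK i) _ (xElt i), smul_xElt, TensorProduct.tmul_zero]

lemma tensor_comm_key :
    xElt 0 ⊗ₜ[KK] xElt 1 = xElt 1 ⊗ₜ[KK] xElt 0 := by
  set a := xElt 0; set b := xElt 1; set c := xElt 2
  have e1 : a ⊗ₜ[KK] b + a ⊗ₜ[KK] c = 0 := by
    have := congrArg (fun m => a ⊗ₜ[KK] m) sum_xElt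
    simpa [TensorProduct.tmul_add, diagT 0, a, b, c] using this
  have e2 : a ⊗ₜ[KK] c + b ⊗ₜ[KK] c = 0 := by
    have := congrArg (fun m => m ⊗ₜ[KK] c) sum_xElt
    simpa [TensorProduct.add_tmul, diagT 2, a, b, c] using this
  have e3 : b ⊗ₜ[KK] a + b ⊗ₜ[KK] c = 0 := by
    have := congrArg (fun m => b ⊗ₜ[KK] m) sum_xElt
    simpa [TensorProduct.tmul_add, diagT 1, a, b, c] using this
  calc a ⊗ₜ[KK] b = a ⊗ₜ[KK] c := cancT e1
  _ = b ⊗ₜ[KK] c := cancT e2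
  _ = b ⊗ₜ[KK] a := (cancT e3).symm

theorem statement7
    -- the map `Λ²M → M ⊗ M`, `a ∧ b ↦ a ⊗ b − b ⊗ a`
    (f : (⋀[KK]^2 MM : Submodule KK _) →ₗ[KK] (MM ⊗[KK] MM))
    (hf : ∀ a b : MM, f (wedgeMk KK MM 2 ![a, b]) = a ⊗ₜ[KK] b - b ⊗ₜ[KK] a) :
    kosElt ≠ 0 ∧ f kosElt = 0 ∧ ¬ Function.Injective f := by
  have hne : kosElt ≠ 0 := by
    intro h
    have hval : ExteriorAlgebra.ιMulti KK 2 ![xElt 0, xElt 1] = 0 := by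
      have := congrArg Subtype.val h
      simpa [kosElt, wedgeMk] using this
    have := congrArg (ExteriorAlgebra.liftAlternating Ffam) hval
    rw [lift_eval, map_zero] at this
    simp only [Matrix.cons_val_zero, Matrix.cons_val_one, Matrix.head_cons] at this
    exact key_ne this
  have hker : f kosElt = 0 := by
    show f (wedgeMk KK MM 2 ![xElt 0, xElt 1]) = 0
    rw [hf, sub_eq_zero]
    exact tensor_comm_key
  refine ⟨hne, hker, fun hinj => ?_⟩
  apply hne
  apply hinj
  rw [hker, map_zero]


end
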